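/- Let p_0, p_1, … be pairwise distinct propositional atoms and, for each i ∈ ℕ, let T_i = Cn({¬p_i} ∪ {p_j : j > i}). Then { T_i : i ∈ ℕ } is a countable family of pairwise inconsistent theories (the union of any two distinct members is inconsistent), and it is not representable by any default theory; in particular, it is not representable by any normal default theory. -/

import Mathlib

/-- Propositional formulas over a set of atoms `α`. -/
inductive PropForm (α : Type) : Type
  | atom : α → PropForm α
  | fls  : PropForm α
  | impl : PropForm α → PropForm α → PropForm α

namespace PropForm

/-- Negation `¬φ`, definable as `φ → ⊥`. -/
def neg {α : Type} (φ : PropForm α) : PropForm α := impl φ fls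

/-- Conjunction, definable from implication and falsum. -/
def conj {α : Type} (φ ψ : PropForm α) : PropForm α := (φ.impl ψ.neg).neg

/-- Biimplication `φ ↔ ψ`. -/
def biimp {α : Type} (φ ψ : PropForm α) : PropForm α := conj (φ.impl ψ) (ψ.impl φ)

/-- Evaluation of a formula under a valuation of the atoms. -/
def eval {α : Type} (v : α → Prop) : PropForm α → Prop
  | atom a   => v a
  | fls      => False
  | impl φ ψ => eval v φ → eval v ψ

/-- Renaming/embedding of atoms. -/
def map {α β : Type} (f : α → β) : PropForm α → PropForm β
  | atom a   => atom (f a)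
  | fls      => fls
  | impl φ ψ => impl (map f φ) (map f ψ)

end PropForm

/-- Classical propositional consequence operator. -/
def Cn {α : Type} (S : Set (PropForm α)) : Set (PropForm α) :=
  {φ | ∀ v : α → Prop, (∀ ψ ∈ S, ψ.eval v) → φ.eval v}

/-- A theory: a set of formulas closed under propositional consequence. -/
def IsTheory {α : Type} (S : Set (PropForm α)) : Prop := Cn S ⊆ S

/-- A set of formulas is consistent if its consequences are not the whole language. -/
def Consistent {α : Type} (S : Set (PropForm α)) : Prop := Cn S ≠ Set.univ

/-- A default `α : Γ / β` with prerequisite, finite set of justifications, consequent. -/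
structure Default (α : Type) where
  pre : PropForm α
  jus : Finset (PropForm α)
  con : PropForm α

/-- A default is applicable w.r.t. `S` if no justification's negation follows from `S`. -/
def Default.Applicable {α : Type} (S : Set (PropForm α)) (d : Default α) : Prop :=
  ∀ γ ∈ d.jus, γ.neg ∉ Cn S

/-- The reduct of `D` w.r.t. `S`: the monotone rules `pre/con` of `S`-applicable defaults. -/
def Reduct {α : Type} (D : Set (Default α)) (S : Set (PropForm α)) :
    Set (PropForm α × PropForm α) :=
  {r | ∃ d ∈ D, d.Applicable S ∧ r = (d.pre, d.con)}

/-- `Cn^B(W)`: consequences of `W` in propositional calculus augmented with rules `B`;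
the least set containing `W`, closed under `Cn`, and closed under the rules of `B`. -/
def CnRules {α : Type} (B : Set (PropForm α × PropForm α)) (W : Set (PropForm α)) :
    Set (PropForm α) :=
  ⋂₀ {S | W ⊆ S ∧ Cn S ⊆ S ∧ ∀ r ∈ B, r.1 ∈ S → r.2 ∈ S}

/-- `S` is an extension of the default theory `(D, W)`. -/
def IsExtension {α : Type} (D : Set (Default α)) (W S : Set (PropForm α)) : Prop :=
  S = CnRules (Reduct D S) W

/-- The family of all extensions of `(D, W)`. -/
def ext {α : Type} (D : Set (Default α)) (W : Set (PropForm α)) : Set (Set (PropForm α)) :=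
  {S | IsExtension D W S}

/-- A default is prerequisite-free if its prerequisite is a tautology. -/
def Default.PrereqFree {α : Type} (d : Default α) : Prop :=
  d.pre ∈ Cn (∅ : Set (PropForm α))

/-- A default is normal if it has the form `α : {β} / β`. -/
def Default.Normal {α : Type} (d : Default α) : Prop := d.jus = {d.con}

section CnBasic
variable {α : Type}

lemma subset_Cn (S : Set (PropForm α)) : S ⊆ Cn S :=
  fun φ h v hv => hv φ h

lemma Cn_mono {S S' : Set (PropForm α)} (h : S ⊆ S') : Cn S ⊆ Cn S' :=
  fun φ hφ v hv => hφ v (fun ψ hψ => hv ψ (h hψ))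

lemma Cn_cut {S X : Set (PropForm α)} (h : S ⊆ Cn X) : Cn S ⊆ Cn X :=
  fun φ hφ v hv => hφ v (fun ψ hψ => h hψ v hv)

lemma Cn_idem (S : Set (PropForm α)) : Cn (Cn S) = Cn S :=
  Set.Subset.antisymm (Cn_cut (fun _ h => h)) (Cn_mono (subset_Cn S))

lemma eval_congr {v w : α → Prop} (h : ∀ a, v a ↔ w a) :
    ∀ φ : PropForm α, φ.eval v ↔ φ.eval w := by
  intro φ; induction φ with
  | atom a => exact h a
  | fls => exact Iff.rfl
  | impl φ ψ ih1 ih2 => exact imp_congr ih1 ih2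

/-- Atoms occurring in a formula. -/
def PropForm.atoms [DecidableEq α] : PropForm α → Finset α
  | PropForm.atom a => {a}
  | PropForm.fls => ∅
  | PropForm.impl φ ψ => φ.atoms ∪ ψ.atoms

lemma eval_agree [DecidableEq α] {v w : α → Prop} :
    ∀ φ : PropForm α, (∀ a ∈ φ.atoms, v a ↔ w a) → (φ.eval v ↔ φ.eval w) := by
  intro φ; induction φ with
  | atom a => intro h; exact h a (by simp [PropForm.atoms])
  | fls => intro _; exact Iff.rfl
  | impl φ ψ ih1 ih2 =>
      intro h
      exact imp_congr (ih1 fun a ha => h a (by simp [PropForm.atoms, ha]))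
        (ih2 fun a ha => h a (by simp [PropForm.atoms, ha]))

end CnBasic

section Compact
variable {α : Type}

/-- Satisfaction set for Bool valuations. -/
def SatB (φ : PropForm α) : Set (α → Bool) := {v | φ.eval (fun a => v a = true)}

lemma isClopen_SatB (φ : PropForm α) : IsClopen (SatB φ) := by
  induction φ with
  | atom a =>
      have : SatB (PropForm.atom a) = (fun v : α → Bool => v a) ⁻¹' {true} := by
        ext v; simp [SatB, PropForm.eval]
      rw [this]
      exact (isClopen_discrete _).preimage (continuous_apply a)
  | fls =>
      have : SatB (PropForm.fls : PropForm α) = ∅ := by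
        ext v; simp [SatB, PropForm.eval]
      rw [this]; exact isClopen_empty
  | impl φ ψ ih1 ih2 =>
      have : SatB (φ.impl ψ) = (SatB φ)ᶜ ∪ SatB ψ := by
        ext v
        simp only [SatB, Set.mem_setOf_eq, PropForm.eval, Set.mem_union, Set.mem_compl_iff]
        tauto
      rw [this]; exact (ih1.compl).union ih2

open Classical in
lemma Cn_compact {S : Set (PropForm α)} {φ : PropForm α} (h : φ ∈ Cn S) :
    ∃ t : Finset (PropForm α), ↑t ⊆ S ∧ φ ∈ Cn (↑t : Set (PropForm α)) := by
  by_contra hc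
  push_neg at hc
  -- closed family indexed by S
  have hempty : (SatB φ)ᶜ ∩ ⋂ ψ : S, SatB ψ.1 = ∅ := by
    by_contra hne
    rcases Set.nonempty_iff_ne_empty.2 hne with ⟨w, hw⟩
    have hw1 : w ∈ (SatB φ)ᶜ := hw.1
    have hw2 : ∀ ψ : S, w ∈ SatB ψ.1 := by
      have := hw.2; simpa [Set.mem_iInter] using this
    have : φ.eval (fun a => w a = true) := h _ (fun ψ hψ => hw2 ⟨ψ, hψ⟩)
    exact hw1 this
  have hcpt : IsCompact ((SatB φ)ᶜ) := ((isClopen_SatB φ).compl.isClosed).isCompact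
  obtain ⟨u, hu⟩ := hcpt.elim_finite_subfamily_closed (fun ψ : S => SatB ψ.1)
    (fun ψ => (isClopen_SatB ψ.1).isClosed) hempty
  set t : Finset (PropForm α) := u.image Subtype.val with ht
  have hts : ↑t ⊆ S := by
    intro ψ hψ
    simp only [ht, Finset.coe_image, Set.mem_image, Finset.mem_coe] at hψ
    rcases hψ with ⟨⟨ψ', hψ'⟩, _, rfl⟩
    exact hψ'
  have : φ ∈ Cn (↑t : Set (PropForm α)) := by
    intro v hv
    by_contra hnφ
    set w : α → Bool := fun a => decide (v a) with hwdef
    have hvw : ∀ a, v a ↔ (w a = true) := by intro a; simp [hwdef]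
    have hwφ : w ∈ (SatB φ)ᶜ := by
      intro hmem
      exact hnφ ((eval_congr hvw φ).2 hmem)
    have hwmem : w ∈ (SatB φ)ᶜ ∩ ⋂ ψ ∈ u, SatB ψ.1 := by
      refine ⟨hwφ, ?_⟩
      simp only [Set.mem_iInter]
      intro ψ hψ
      have : ψ.1 ∈ (↑t : Set (PropForm α)) :=
        Finset.mem_coe.2 (Finset.mem_image_of_mem Subtype.val hψ)
      exact (eval_congr hvw ψ.1).1 (hv ψ.1 this)
    rw [hu] at hwmem
    exact hwmem
  exact hc t hts this

end Compact
section Chains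
variable {α : Type}

/-- Consequents of rules in a list. -/
def consSet (l : List (PropForm α × PropForm α)) : Set (PropForm α) :=
  {c | ∃ s ∈ l, c = s.2}

lemma consSet_nil : consSet ([] : List (PropForm α × PropForm α)) = ∅ := by
  ext c; simp [consSet]

lemma consSet_append (l l' : List (PropForm α × PropForm α)) :
    consSet (l ++ l') = consSet l ∪ consSet l' := by
  ext c
  constructor
  · rintro ⟨s, hs, rfl⟩
    rcases List.mem_append.1 hs with h | h
    · exact Or.inl ⟨s, h, rfl⟩
    · exact Or.inr ⟨s, h, rfl⟩
  · rintro (⟨s, hs, rfl⟩ | ⟨s, hs, rfl⟩)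
    · exact ⟨s, List.mem_append_left _ hs, rfl⟩
    · exact ⟨s, List.mem_append_right _ hs, rfl⟩

/-- A finite derivation: a list of rules each of whose prerequisite follows from `W`
together with the consequents of earlier rules. -/
inductive Chain (B : Set (PropForm α × PropForm α)) (W : Set (PropForm α)) :
    List (PropForm α × PropForm α) → Prop
  | nil : Chain B W []
  | snoc (l r) : Chain B W l → r ∈ B → r.1 ∈ Cn (W ∪ consSet l) → Chain B W (l ++ [r])

lemma chain_mem {B : Set (PropForm α × PropForm α)} {W : Set (PropForm α)}
    {l : List (PropForm α × PropForm α)} (h : Chain B W l) : ∀ r ∈ l, r ∈ B := by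
  induction h with
  | nil => intro r hr; simp at hr
  | snoc l r _ hrB _ ih =>
      intro s hs
      rcases List.mem_append.1 hs with h1 | h2
      · exact ih s h1
      · simp at h2; subst h2; exact hrB

lemma chain_transfer {B B' : Set (PropForm α × PropForm α)} {W : Set (PropForm α)}
    {l : List (PropForm α × PropForm α)} (h : Chain B W l)
    (hB : ∀ r ∈ l, r ∈ B') : Chain B' W l := by
  induction h with
  | nil => exact Chain.nil
  | snoc l r hl hrB hpre ih =>
      refine Chain.snoc l r (ih fun s hs => hB s (List.mem_append_left _ hs)) ?_ hpre
      exact hB r (List.mem_append_right _ (by simp))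

lemma chain_append {B : Set (PropForm α × PropForm α)} {W : Set (PropForm α)}
    {l l' : List (PropForm α × PropForm α)} (h : Chain B W l) (h' : Chain B W l') :
    Chain B W (l ++ l') := by
  induction h' with
  | nil => simpa using h
  | snoc t r ht hrB hpre ih =>
      rw [← List.append_assoc]
      have hsub : W ∪ consSet t ⊆ W ∪ consSet (l ++ t) := by
        rw [consSet_append]
        exact Set.union_subset_union_right _ Set.subset_union_right
      exact Chain.snoc (l ++ t) r ih hrB (Cn_mono hsub hpre)

-- CnRules basic properties
lemma W_subset_CnRules (B : Set (PropForm α × PropForm α)) (W : Set (PropForm α)) :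
    W ⊆ CnRules B W :=
  fun _ h => Set.mem_sInter.2 fun _ hS => hS.1 h

lemma Cn_CnRules (B : Set (PropForm α × PropForm α)) (W : Set (PropForm α)) :
    Cn (CnRules B W) ⊆ CnRules B W := by
  intro φ h
  refine Set.mem_sInter.2 fun S hS => ?_
  exact hS.2.1 (Cn_mono (Set.sInter_subset_of_mem hS) h)

lemma CnRules_rule {B : Set (PropForm α × PropForm α)} {W : Set (PropForm α)}
    {r : PropForm α × PropForm α} (hr : r ∈ B) (h : r.1 ∈ CnRules B W) :
    r.2 ∈ CnRules B W :=
  Set.mem_sInter.2 fun S hS => hS.2.2 r hr (Set.mem_sInter.1 h S hS)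

lemma CnRules_min {B : Set (PropForm α × PropForm α)} {W S : Set (PropForm α)}
    (h1 : W ⊆ S) (h2 : Cn S ⊆ S) (h3 : ∀ r ∈ B, r.1 ∈ S → r.2 ∈ S) :
    CnRules B W ⊆ S :=
  Set.sInter_subset_of_mem ⟨h1, h2, h3⟩

lemma consSet_subset_CnRules {B : Set (PropForm α × PropForm α)} {W : Set (PropForm α)}
    {l : List (PropForm α × PropForm α)} (h : Chain B W l) :
    consSet l ⊆ CnRules B W := by
  induction h with
  | nil => rw [consSet_nil]; exact Set.empty_subset _
  | snoc t r ht hrB hpre ih =>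
      rw [consSet_append]
      refine Set.union_subset ih ?_
      have hr1 : r.1 ∈ CnRules B W := by
        refine Cn_CnRules B W (Cn_cut ?_ hpre)
        exact Set.union_subset (Set.Subset.trans (W_subset_CnRules B W) (subset_Cn _))
          (Set.Subset.trans ih (subset_Cn _))
      have h2 := CnRules_rule hrB hr1
      rintro c ⟨s, hs, rfl⟩
      simp at hs; subst hs; exact h2

/-- Every element of `CnRules B W` has a finite derivation. -/
lemma CnRules_subset_chains (B : Set (PropForm α × PropForm α)) (W : Set (PropForm α)) :
    CnRules B W ⊆ {φ | ∃ l, Chain B W l ∧ φ ∈ Cn (W ∪ consSet l)} := by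
  classical
  refine CnRules_min ?_ ?_ ?_
  · intro φ h
    exact ⟨[], Chain.nil, subset_Cn _ (Set.mem_union_left _ h)⟩
  · intro φ h
    obtain ⟨t, hts, hφt⟩ := Cn_compact h
    have hcomb : ∀ t' : Finset (PropForm α),
        (∀ ψ ∈ t', ∃ l, Chain B W l ∧ ψ ∈ Cn (W ∪ consSet l)) →
        ∃ L, Chain B W L ∧ ∀ ψ ∈ t', ψ ∈ Cn (W ∪ consSet L) := by
      intro t'
      induction t' using Finset.induction_on with
      | empty => intro _; exact ⟨[], Chain.nil, by simp⟩
      | @insert ψ₀ s hnot ih =>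
          intro hall
          obtain ⟨L, hL, hLmem⟩ := ih (fun ψ hψ => hall ψ (Finset.mem_insert_of_mem hψ))
          obtain ⟨l₀, hl₀, hl₀mem⟩ := hall ψ₀ (Finset.mem_insert_self _ _)
          refine ⟨L ++ l₀, chain_append hL hl₀, ?_⟩
          have hsubL : W ∪ consSet L ⊆ W ∪ consSet (L ++ l₀) := by
            rw [consSet_append]
            exact Set.union_subset_union_right _ Set.subset_union_left
          have hsubl₀ : W ∪ consSet l₀ ⊆ W ∪ consSet (L ++ l₀) := by
            rw [consSet_append]
            exact Set.union_subset_union_right _ Set.subset_union_right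
          intro ψ hψ
          rcases Finset.mem_insert.1 hψ with rfl | hψs
          · exact Cn_mono hsubl₀ hl₀mem
          · exact Cn_mono hsubL (hLmem ψ hψs)
    obtain ⟨L, hL, hLmem⟩ := hcomb t (fun ψ hψ => hts hψ)
    exact ⟨L, hL, Cn_cut (fun ψ hψ => hLmem ψ hψ) hφt⟩
  · rintro r hrB ⟨l, hl, hpre⟩
    refine ⟨l ++ [r], Chain.snoc l r hl hrB hpre, ?_⟩
    refine subset_Cn _ (Set.mem_union_right _ ?_)
    exact ⟨r, by simp, rfl⟩

end Chains
section Family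
variable {α : Type} [DecidableEq α]

/-- The generating set of the theory `T i`. -/
def Nset (p : ℕ → α) (i : ℕ) : Set (PropForm α) :=
  {(PropForm.atom (p i)).neg} ∪ {φ | ∃ j > i, φ = PropForm.atom (p j)}

/-- The theory `T i`. -/
def Tth (p : ℕ → α) (i : ℕ) : Set (PropForm α) := Cn (Nset p i)

lemma sat_Nset {p : ℕ → α} (hp : Function.Injective p) (i : ℕ) :
    ∀ ψ ∈ Nset p i, ψ.eval (fun a => a ≠ p i) := by
  rintro ψ (h | ⟨j, hj, rfl⟩)
  · rw [Set.mem_singleton_iff] at h; subst h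
    intro h; exact h rfl
  · intro h
    rw [hp h] at hj
    exact absurd hj (lt_irrefl i)

lemma neg_atom_notmem {p : ℕ → α} (hp : Function.Injective p) {i j : ℕ} (hij : j ≠ i) :
    (PropForm.atom (p j)).neg ∉ Tth p i := by
  intro h
  have := h (fun a => a ≠ p i) (sat_Nset hp i)
  exact this (fun he => hij (hp he))

lemma bound_exists (p : ℕ → α) (hp : Function.Injective p) (φ : PropForm α) :
    ∃ I : ℕ, ∀ k, I ≤ k → p k ∉ φ.atoms := by
  have hfin : {k : ℕ | p k ∈ φ.atoms}.Finite :=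
    Set.Finite.preimage (Set.injOn_of_injective hp) (φ.atoms.finite_toSet)
  obtain ⟨b, hb⟩ := hfin.bddAbove
  refine ⟨b + 1, fun k hk hmem => ?_⟩
  have := hb hmem
  omega

open Classical in
/-- If `φ` mentions no atom `p k` with `k ≥ i` and `φ ∈ T i`, then `φ` is a tautology. -/
lemma tauto_of_mem_Tth {p : ℕ → α} (hp : Function.Injective p) {i : ℕ} {φ : PropForm α}
    (hi : ∀ k, i ≤ k → p k ∉ φ.atoms) (h : φ ∈ Tth p i) (v : α → Prop) : φ.eval v := by
  set v' : α → Prop := fun a => if (∃ k, i ≤ k ∧ a = p k) then (a ≠ p i) else v a with hv'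
  have hpos : ∀ a, (∃ k, i ≤ k ∧ a = p k) → (v' a ↔ a ≠ p i) := by
    intro a hc
    simp only [hv']
    rw [if_pos hc]
  have hneg : ∀ a, ¬ (∃ k, i ≤ k ∧ a = p k) → (v' a ↔ v a) := by
    intro a hc
    simp only [hv']
    rw [if_neg hc]
  have hsat : ∀ ψ ∈ Nset p i, ψ.eval v' := by
    rintro ψ (hmem | ⟨j, hj, rfl⟩)
    · rw [Set.mem_singleton_iff] at hmem; subst hmem
      intro hcontra
      have hvi : v' (p i) := hcontra
      exact ((hpos _ ⟨i, le_refl i, rfl⟩).1 hvi) rfl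
    · show v' (p j)
      refine (hpos _ ⟨j, le_of_lt hj, rfl⟩).2 ?_
      intro he
      rw [hp he] at hj
      exact absurd hj (lt_irrefl i)
  have hφ' : φ.eval v' := h v' hsat
  have hagree : ∀ a ∈ φ.atoms, v' a ↔ v a := by
    intro a ha
    refine hneg a ?_
    rintro ⟨k, hk, rfl⟩
    exact hi k hk ha
  exact (eval_agree φ hagree).1 hφ'

lemma tauto_mem_Cn {S : Set (PropForm α)} {φ : PropForm α} (h : ∀ v, φ.eval v) :
    φ ∈ Cn S := fun v _ => h v

lemma Cn_Tth (p : ℕ → α) (i : ℕ) : Cn (Tth p i) = Tth p i := Cn_idem _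

lemma incons_aux {p : ℕ → α} (hp : Function.Injective p) {i j : ℕ} (hij : i < j) :
    Cn (Tth p i ∪ Tth p j) = Set.univ := by
  have h1 : PropForm.atom (p j) ∈ Tth p i :=
    subset_Cn _ (Set.mem_union_right _ ⟨j, hij, rfl⟩)
  have h2 : (PropForm.atom (p j)).neg ∈ Tth p j :=
    subset_Cn _ (Set.mem_union_left _ (Set.mem_singleton _))
  apply Set.eq_univ_of_forall
  intro φ v hv
  have e1 := hv _ (Set.mem_union_left _ h1)
  have e2 := hv _ (Set.mem_union_right _ h2)
  exact absurd (e2 e1) not_false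

end Family
section Main
variable {α : Type} [DecidableEq α]

lemma not_rep {p : ℕ → α} (hp : Function.Injective p) :
    ¬ ∃ (D : Set (Default α)) (W : Set (PropForm α)),
        ext D W = {T | ∃ i : ℕ, T = Tth p i} := by
  rintro ⟨D, W, hext⟩
  have hTmem : ∀ i, Tth p i = CnRules (Reduct D (Tth p i)) W := by
    intro i
    have hmem : Tth p i ∈ ext D W := by rw [hext]; exact ⟨i, rfl⟩
    exact hmem
  choose bnd hbnd using fun φ : PropForm α => bound_exists p hp φ
  have hnotmem : ∀ {γ : PropForm α} {i : ℕ}, bnd γ ≤ i → γ ∉ Tth p 0 → γ ∉ Tth p i := by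
    intro γ i hbi h0 hi
    exact h0 (tauto_mem_Cn (tauto_of_mem_Tth hp
      (fun k hk => hbnd γ k (le_trans hbi hk)) hi))
  have happI : ∀ (l : List (PropForm α × PropForm α)),
      (∀ r ∈ l, r ∈ Reduct D (Tth p 0)) →
      ∃ I, ∀ i, I ≤ i → ∀ r ∈ l, r ∈ Reduct D (Tth p i) := by
    intro l
    induction l with
    | nil => exact fun _ => ⟨0, fun i _ r hr => absurd hr List.not_mem_nil⟩
    | cons r t ih =>
        intro hl
        obtain ⟨It, hIt⟩ := ih (fun s hs => hl s (List.mem_cons_of_mem r hs))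
        obtain ⟨d, hdD, happ, hrd⟩ := hl r List.mem_cons_self
        refine ⟨max (d.jus.sup (fun γ => bnd γ.neg)) It, fun i hi s hs => ?_⟩
        rcases List.mem_cons.1 hs with rfl | hst
        · refine ⟨d, hdD, ?_, hrd⟩
          intro γ hγ
          rw [Cn_Tth]
          have h0 : γ.neg ∉ Tth p 0 := by
            have h00 := happ γ hγ
            rw [Cn_Tth] at h00
            exact h00
          exact hnotmem
            (le_trans (le_trans (Finset.le_sup (f := fun γ => bnd γ.neg) hγ) (le_max_left _ _)) hi) h0
        · exact hIt i (le_trans (le_max_right _ _) hi) s hst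
  have hneg0 : (PropForm.atom (p 0)).neg ∈ Tth p 0 :=
    subset_Cn _ (Set.mem_union_left _ (Set.mem_singleton _))
  have hneg0' : (PropForm.atom (p 0)).neg ∈ CnRules (Reduct D (Tth p 0)) W := by
    rw [← hTmem 0]; exact hneg0
  obtain ⟨l, hl, hmem⟩ := CnRules_subset_chains _ _ hneg0'
  obtain ⟨I, hI⟩ := happI l (chain_mem hl)
  set i := max I 1 with hidef
  have hredi : ∀ r ∈ l, r ∈ Reduct D (Tth p i) := hI i (le_max_left _ _)
  have hchaini : Chain (Reduct D (Tth p i)) W l := chain_transfer hl hredi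
  have hWsub : W ⊆ Tth p i := by rw [hTmem i]; exact W_subset_CnRules _ _
  have hcons : consSet l ⊆ Tth p i := by
    rw [hTmem i]; exact consSet_subset_CnRules hchaini
  have hfinal : (PropForm.atom (p 0)).neg ∈ Tth p i :=
    Cn_cut (X := Nset p i) (Set.union_subset hWsub hcons) hmem
  have h0i : (0 : ℕ) ≠ i := by
    have := le_max_right I 1; omega
  exact neg_atom_notmem hp h0i hfinal

end Main
/-- the family of theories `T_i = Cn({¬p_i} ∪ {p_j : j > i})` is a countable
family of pairwise inconsistent theories that is not representable by any default theory;
in particular not by any normal one. -/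
theorem pairwise_inconsistent_family_not_representable {α : Type} [Denumerable α]
    (p : ℕ → α) (hp : Function.Injective p)
    (𝒯 : Set (Set (PropForm α)))
    (h𝒯 : 𝒯 = {T | ∃ i : ℕ,
      T = Cn ({(PropForm.atom (p i)).neg} ∪ {φ | ∃ j > i, φ = PropForm.atom (p j)})}) :
    𝒯.Countable ∧
    (∀ T ∈ 𝒯, IsTheory T) ∧
    (∀ T ∈ 𝒯, ∀ T' ∈ 𝒯, T ≠ T' → ¬ Consistent (T ∪ T')) ∧
    (¬ ∃ (D : Set (Default α)) (W : Set (PropForm α)), ext D W = 𝒯) ∧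
    (¬ ∃ (D : Set (Default α)) (W : Set (PropForm α)),
        (∀ d ∈ D, d.Normal) ∧ ext D W = 𝒯) := by
  letI : DecidableEq α := Classical.decEq α
  have h𝒯' : 𝒯 = {T | ∃ i : ℕ, T = Tth p i} := h𝒯
  have h4 : ¬ ∃ (D : Set (Default α)) (W : Set (PropForm α)), ext D W = 𝒯 := by
    rw [h𝒯']
    exact not_rep hp
  refine ⟨?_, ?_, ?_, h4, ?_⟩
  · rw [h𝒯']
    have : {T | ∃ i : ℕ, T = Tth p i} = Set.range (Tth p) := by
      ext T
      simp [Set.range, eq_comm]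
    rw [this]
    exact Set.countable_range _
  · rw [h𝒯']
    rintro T ⟨i, rfl⟩
    exact (Cn_Tth p i).subset
  · rw [h𝒯']
    rintro T ⟨i, rfl⟩ T' ⟨j, rfl⟩ hne hcon
    have hij : i ≠ j := by rintro rfl; exact hne rfl
    apply hcon
    rcases hij.lt_or_gt with h | h
    · exact incons_aux hp h
    · rw [Set.union_comm]; exact incons_aux hp h
  · rintro ⟨D, W, _, h⟩
    exact h4 ⟨D, W, h⟩
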